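/- Let S be a generalized numerical semigroup in ℕ^d. Then τ(S) ≤ t(S), and moreover τ(S) = t(S) if and only if for every gap x ∈ H(S) there exists a Frobenius allowable gap F ∈ FA(S) with F − x ∈ S. -/

import Mathlib

open Finset

/-- A generalized numerical semigroup (GNS) in `ℕ^d`: contains `0`, is closed under
componentwise addition, and has finite complement. -/
def IsGNS {d : ℕ} (S : Set (Fin d → ℕ)) : Prop :=
  (0 : Fin d → ℕ) ∈ S ∧ (∀ a ∈ S, ∀ b ∈ S, a + b ∈ S) ∧ Sᶜ.Finite

/-- A relaxed monomial order on `ℕ^d`: a (strict) total order `r` such that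
`r v w → r v (w + u)` and `0` is below every nonzero element. -/
def IsRMO {d : ℕ} (r : (Fin d → ℕ) → (Fin d → ℕ) → Prop) : Prop :=
  IsStrictTotalOrder (Fin d → ℕ) r ∧
  (∀ v w u : Fin d → ℕ, r v w → r v (w + u)) ∧
  (∀ v : Fin d → ℕ, v ≠ 0 → r 0 v)

/-- `F` is the Frobenius gap of `S` with respect to the order `r`, i.e. the
`r`-maximum of the gap set `ℕ^d \ S`. -/
def IsFrobGapWrt {d : ℕ} (S : Set (Fin d → ℕ))
    (r : (Fin d → ℕ) → (Fin d → ℕ) → Prop) (F : Fin d → ℕ) : Prop :=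
  F ∉ S ∧ ∀ x, x ∉ S → x ≠ F → r x F

/-- `F` is a Frobenius allowable gap of `S`: it is the Frobenius gap with respect to
some relaxed monomial order. -/
def FrobAllowable {d : ℕ} (S : Set (Fin d → ℕ)) (F : Fin d → ℕ) : Prop :=
  ∃ r, IsRMO r ∧ IsFrobGapWrt S r F

/-- `F` is a maximal gap of `S` with respect to the natural (componentwise)
partial order on `ℕ^d`. -/
def MaxGap {d : ℕ} (S : Set (Fin d → ℕ)) (F : Fin d → ℕ) : Prop :=
  F ∉ S ∧ ∀ x, x ∉ S → F ≤ x → x = F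

/-- The set of Frobenius allowable gaps of `S`, i.e. the maximal elements of the gap
set under the natural partial order. -/
def FA {d : ℕ} (S : Set (Fin d → ℕ)) : Set (Fin d → ℕ) := {F | MaxGap S F}

/-- The set of pseudo-Frobenius gaps of `S`. -/
def PF {d : ℕ} (S : Set (Fin d → ℕ)) : Set (Fin d → ℕ) :=
  {P | P ∉ S ∧ ∀ s ∈ S, s ≠ 0 → P + s ∈ S}

/-- `S` is quasi-irreducible: for every gap `x`, either `2x` is Frobenius allowable or
`F - x ∈ S` for some Frobenius allowable gap `F`. -/
def QuasiIrreducible {d : ℕ} (S : Set (Fin d → ℕ)) : Prop :=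
  ∀ x, x ∉ S → (x + x ∈ FA S ∨ ∃ F ∈ FA S, ∃ s ∈ S, x + s = F)

/-- `S` is a Frobenius GNS with Frobenius gap `F`: the gap set has `F` as its unique
maximal element under the natural partial order. -/
def IsFrobeniusGNS {d : ℕ} (S : Set (Fin d → ℕ)) (F : Fin d → ℕ) : Prop :=
  IsGNS S ∧ MaxGap S F ∧ ∀ x, MaxGap S x → x = F

/-- `‖F‖ = ∏ i (F^(i) + 1)`, the number of lattice points in the box `[0, F]`. -/
def normF {d : ℕ} (F : Fin d → ℕ) : ℕ := ∏ i, (F i + 1)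

/-- `N(F)`: the number of Frobenius GNS in `ℕ^d` with Frobenius gap `F`. -/
noncomputable def NF {d : ℕ} (F : Fin d → ℕ) : ℕ :=
  {S : Set (Fin d → ℕ) | IsFrobeniusGNS S F}.ncard

/-- `τ(S) ≤ t(S)`, with equality iff for every gap `x` there is a Frobenius allowable
gap `F` with `F - x ∈ S`. -/
theorem tau_le_type_and_eq_iff {d : ℕ} (S : Set (Fin d → ℕ)) (hS : IsGNS S) :
    (FA S).ncard ≤ (PF S).ncard ∧
    ((FA S).ncard = (PF S).ncard ↔
      ∀ x, x ∉ S → ∃ F ∈ FA S, ∃ s ∈ S, x + s = F) := by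
  obtain ⟨h0, hadd, hfin⟩ := hS
  have hPFfin : (PF S).Finite := hfin.subset (fun x hx => hx.1)
  have hsub : FA S ⊆ PF S := by
    rintro F ⟨hF, hmax⟩
    refine ⟨hF, fun s hs hs0 => ?_⟩
    by_contra hns
    have h1 := hmax (F + s) hns le_self_add
    exact hs0 (add_left_cancel (a := F) (by rw [h1, add_zero]))
  have hPFexists : ∀ x, x ∉ S → ∃ P ∈ PF S, ∃ s ∈ S, x + s = P := by
    intro x hx
    have hTfin : {y | y ∉ S ∧ ∃ s ∈ S, x + s = y}.Finite :=
      hfin.subset (fun y hy => hy.1)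
    have hTne : ({y | y ∉ S ∧ ∃ s ∈ S, x + s = y}).Nonempty :=
      ⟨x, hx, 0, h0, add_zero x⟩
    obtain ⟨y, hy, hymax⟩ : ∃ a ∈ {y | y ∉ S ∧ ∃ s ∈ S, x + s = y}, ∀ a' ∈ {y | y ∉ S ∧ ∃ s ∈ S, x + s = y}, id a ≤ id a' → id a = id a' := by
      obtain ⟨y, hy, hm⟩ := hTfin.exists_maximalFor id _ hTne
      exact ⟨y, hy, fun a' ha' hle => le_antisymm hle (hm ha' hle)⟩
    obtain ⟨hyS, s, hs, hxs⟩ := hy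
    refine ⟨y, ⟨hyS, fun s' hs' hs'0 => ?_⟩, s, hs, hxs⟩
    by_contra hns
    have hmem : y + s' ∈ {y | y ∉ S ∧ ∃ s ∈ S, x + s = y} :=
      ⟨hns, s + s', hadd s hs s' hs', by rw [← add_assoc, hxs]⟩
    have h1 := hymax _ hmem le_self_add
    exact hs'0 (add_left_cancel (a := y) (by simp only [id] at h1; rw [← h1, add_zero]))
  constructor
  · exact Set.ncard_le_ncard hsub hPFfin
  constructor
  · intro heq x hx
    have hEq : FA S = PF S := Set.eq_of_subset_of_ncard_le hsub heq.ge hPFfin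
    obtain ⟨P, hP, s, hs, hxs⟩ := hPFexists x hx
    exact ⟨P, hEq ▸ hP, s, hs, hxs⟩
  · intro hcond
    have hsub' : PF S ⊆ FA S := by
      intro P hP
      obtain ⟨F, hF, s, hs, hPs⟩ := hcond P hP.1
      rcases eq_or_ne s 0 with rfl | hs0
      · rw [add_zero] at hPs; exact hPs ▸ hF
      · exact absurd (hPs ▸ hP.2 s hs hs0) hF.1
    rw [Set.Subset.antisymm hsub hsub']
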